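/- Let N ∈ ℕ, B a real number, and Q = Π_{2 < r ≤ B, r prime} r, with gcd(N, Q) = 1. Then |L_{N,Q}| ∈ O(Q·log B / 2^π(B)) as B → ∞, where π(B) is the prime counting function; concretely, |L_{N,Q}|/Q ≤ (4/3)·Π_{r prime, r ≤ B} ((r+1)/2)/r, and the latter product is O(log B / 2^π(B)). -/

import Mathlib

open Finset

lemma card_L_prime {p N : ℕ} (hp : p.Prime) (hN : ¬ p ∣ N) :
    2 * {s : ZMod p | ∃ x y, x * y = (N : ZMod p) ∧ x + y = s}.ncard ≤ p + 1 := by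
  haveI : Fact p.Prime := ⟨hp⟩
  classical
  have hNz : (N : ZMod p) ≠ 0 := by
    intro h
    exact hN ((ZMod.natCast_eq_zero_iff N p).mp h)
  set f : ZMod p → ZMod p := fun x => x + (N : ZMod p) * x⁻¹ with hf
  set T : Finset (ZMod p) := univ.filter (fun x => x ≠ 0) with hT
  set L : Finset (ZMod p) := univ.filter (fun s => ∃ x y, x * y = (N : ZMod p) ∧ x + y = s)
    with hL
  have hncard : {s : ZMod p | ∃ x y, x * y = (N : ZMod p) ∧ x + y = s}.ncard = L.card := by
    rw [← Set.ncard_coe_finset]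
    congr 1
    ext s
    simp [hL]
  have himage : L = T.image f := by
    ext s
    simp only [hL, hT, mem_filter, mem_univ, true_and, mem_image]
    constructor
    · rintro ⟨x, y, hxy, hs⟩
      have hx : x ≠ 0 := by
        rintro rfl
        rw [zero_mul] at hxy
        exact hNz hxy.symm
      refine ⟨x, hx, ?_⟩
      have hy : y = (N : ZMod p) * x⁻¹ := by
        field_simp
        rw [mul_comm] at hxy
        exact hxy
      rw [hf]
      dsimp only
      rw [← hy, hs]
    · rintro ⟨x, hx, rfl⟩
      exact ⟨x, (N : ZMod p) * x⁻¹, by field_simp, rfl⟩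
  set R : Finset (ZMod p) := T.filter (fun x => x ^ 2 = (N : ZMod p)) with hR
  have hRT : R ⊆ T := filter_subset _ _
  have hfib : ∀ s ∈ T.image f,
      2 ≤ (T.filter (fun x => f x = s)).card + (R.filter (fun x => f x = s)).card := by
    intro s hs
    rcases mem_image.mp hs with ⟨x, hxT, hfx⟩
    have hx : x ≠ 0 := (mem_filter.mp hxT).2
    by_cases hsq : x ^ 2 = (N : ZMod p)
    · have h1 : x ∈ T.filter (fun x => f x = s) := mem_filter.mpr ⟨hxT, hfx⟩
      have h2 : x ∈ R.filter (fun x => f x = s) :=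
        mem_filter.mpr ⟨mem_filter.mpr ⟨hxT, hsq⟩, hfx⟩
      have c1 : 1 ≤ (T.filter (fun x => f x = s)).card := card_pos.mpr ⟨x, h1⟩
      have c2 : 1 ≤ (R.filter (fun x => f x = s)).card := card_pos.mpr ⟨x, h2⟩
      omega
    · set x' : ZMod p := (N : ZMod p) * x⁻¹ with hx'
      have hx'0 : x' ≠ 0 := by
        rw [hx']
        exact mul_ne_zero hNz (inv_ne_zero hx)
      have hxx' : x' ≠ x := by
        intro h
        apply hsq
        have : x * x' = (N : ZMod p) := by rw [hx']; field_simp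
        rw [h] at this
        rw [← this]; ring
      have hfx' : f x' = s := by
        rw [← hfx, hf]
        dsimp only
        rw [hx']
        field_simp
        ring
      have hsub : {x, x'} ⊆ T.filter (fun x => f x = s) := by
        intro z hz
        rcases mem_insert.mp hz with rfl | hz
        · exact mem_filter.mpr ⟨hxT, hfx⟩
        · rw [mem_singleton.mp hz]
          exact mem_filter.mpr ⟨mem_filter.mpr ⟨mem_univ _, hx'0⟩, hfx'⟩
      have : 2 ≤ (T.filter (fun x => f x = s)).card := by
        calc 2 = ({x, x'} : Finset (ZMod p)).card := by
              rw [card_insert_of_notMem (by simp [Ne.symm hxx']), card_singleton]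
        _ ≤ _ := card_le_card hsub
      omega
  have hTcard : T.card = p - 1 := by
    rw [hT, filter_ne', card_erase_of_mem (mem_univ _), card_univ, ZMod.card]
  have hRcard : R.card ≤ 2 := by
    rcases R.eq_empty_or_nonempty with h | ⟨a, ha⟩
    · simp [h]
    · have hsub : R ⊆ {a, -a} := by
        intro b hb
        have hb2 : b ^ 2 = (N : ZMod p) := (mem_filter.mp hb).2
        have ha2 : a ^ 2 = (N : ZMod p) := (mem_filter.mp ha).2
        have : (b - a) * (b + a) = 0 := by
          have : b ^ 2 - a ^ 2 = 0 := by rw [hb2, ha2]; ring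
          calc (b - a) * (b + a) = b ^ 2 - a ^ 2 := by ring
          _ = 0 := this
        rcases mul_eq_zero.mp this with h | h
        · simp [sub_eq_zero.mp h]
        · have : b = -a := by linear_combination h
          simp [this]
      calc R.card ≤ ({a, -a} : Finset (ZMod p)).card := card_le_card hsub
      _ ≤ 2 := card_insert_le _ _ |>.trans (by simp)
  -- fiberwise counting
  have hTsum : T.card = ∑ s ∈ T.image f, (T.filter (fun x => f x = s)).card :=
    card_eq_sum_card_fiberwise (fun x hx => mem_image_of_mem f hx)
  have hRsum : R.card = ∑ s ∈ T.image f, (R.filter (fun x => f x = s)).card :=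
    card_eq_sum_card_fiberwise (fun x hx => mem_image_of_mem f (hRT hx))
  have hmain : 2 * (T.image f).card ≤ T.card + R.card := by
    rw [hTsum, hRsum, ← Finset.sum_add_distrib]
    calc 2 * (T.image f).card = ∑ _s ∈ T.image f, 2 := by
          rw [Finset.sum_const, smul_eq_mul, mul_comm]
    _ ≤ _ := Finset.sum_le_sum hfib
  have hp1 : 1 ≤ p := hp.pos
  rw [hncard, himage]
  omega

lemma LL_mul {a b : ℕ} (N : ℕ) (h : Nat.Coprime a b) :
    {s : ZMod (a*b) | ∃ x y, x * y = (N : ZMod (a*b)) ∧ x + y = s}.ncard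
      = {s : ZMod a | ∃ x y, x * y = (N : ZMod a) ∧ x + y = s}.ncard
        * {s : ZMod b | ∃ x y, x * y = (N : ZMod b) ∧ x + y = s}.ncard := by
  set e := ZMod.chineseRemainder h with he
  set A := {s : ZMod a | ∃ x y, x * y = (N : ZMod a) ∧ x + y = s} with hA
  set Bs := {s : ZMod b | ∃ x y, x * y = (N : ZMod b) ∧ x + y = s} with hBs
  have hset : {s : ZMod (a*b) | ∃ x y, x * y = (N : ZMod (a*b)) ∧ x + y = s}
      = ⇑e.symm '' (A ×ˢ Bs) := by
    ext s
    simp only [Set.mem_setOf_eq, Set.mem_image, Set.mem_prod]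
    constructor
    · rintro ⟨x, y, hxy, hs⟩
      refine ⟨e s, ⟨⟨(e x).1, (e y).1, ?_, ?_⟩, ⟨(e x).2, (e y).2, ?_, ?_⟩⟩,
        e.symm_apply_apply s⟩
      · have : e (x * y) = e (N : ZMod (a*b)) := by rw [hxy]
        rw [map_mul, map_natCast] at this
        exact congrArg Prod.fst this
      · have : e (x + y) = e s := by rw [hs]
        rw [map_add] at this
        exact congrArg Prod.fst this
      · have : e (x * y) = e (N : ZMod (a*b)) := by rw [hxy]
        rw [map_mul, map_natCast] at this
        exact congrArg Prod.snd this
      · have : e (x + y) = e s := by rw [hs]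
        rw [map_add] at this
        exact congrArg Prod.snd this
    · rintro ⟨⟨s₁, s₂⟩, ⟨⟨x₁, y₁, hxy₁, hs₁⟩, ⟨x₂, y₂, hxy₂, hs₂⟩⟩, rfl⟩
      refine ⟨e.symm (x₁, x₂), e.symm (y₁, y₂), ?_, ?_⟩
      · rw [← map_mul]
        have : (x₁, x₂) * (y₁, y₂) = ((N : ZMod a), (N : ZMod b)) := by
          rw [Prod.mk_mul_mk, hxy₁, hxy₂]
        rw [this]
        have : ((N : ZMod a), (N : ZMod b)) = ((N : ZMod a × ZMod b)) := by
          exact (Prod.ext (by simp) (by simp))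
        rw [this, ← map_natCast e.symm]
      · rw [← map_add, Prod.mk_add_mk, hs₁, hs₂]
  rw [hset, Set.ncard_image_of_injective _ e.symm.injective]
  rw [← Nat.card_coe_set_eq, ← Nat.card_coe_set_eq, ← Nat.card_coe_set_eq]
  rw [Nat.card_congr (Equiv.Set.prod A Bs), Nat.card_prod]

lemma L_one (N : ℕ) {M : ℕ} (hM : M = 1) :
    {s : ZMod M | ∃ x y, x * y = (N : ZMod M) ∧ x + y = s}.ncard = 1 := by
  subst hM
  have : {s : ZMod 1 | ∃ x y, x * y = (N : ZMod 1) ∧ x + y = s} = Set.univ := by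
    ext s
    simp only [Set.mem_setOf_eq, Set.mem_univ, iff_true]
    exact ⟨0, 0, Subsingleton.elim _ _, Subsingleton.elim _ _⟩
  rw [this, Set.ncard_univ, Nat.card_eq_fintype_card, ZMod.card]

lemma L_prod (N : ℕ) (F : Finset ℕ) (hF : ∀ r ∈ F, r.Prime) :
    {s : ZMod (∏ r ∈ F, r) | ∃ x y, x * y = (N : ZMod (∏ r ∈ F, r)) ∧ x + y = s}.ncard
      = ∏ r ∈ F, {s : ZMod r | ∃ x y, x * y = (N : ZMod r) ∧ x + y = s}.ncard := by
  classical
  induction F using Finset.induction_on with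
  | empty => exact (L_one N (by simp)).trans (by simp)
  | insert p F ha ih =>
      have hp := hF p (mem_insert_self p F)
      have hF' : ∀ r ∈ F, r.Prime := fun r hr => hF r (mem_insert_of_mem hr)
      have hcop : Nat.Coprime p (∏ r ∈ F, r) := by
        apply Nat.Coprime.prod_right
        intro r hr
        exact (Nat.coprime_primes hp (hF' r hr)).mpr (by rintro rfl; exact ha hr)
      rw [Finset.prod_insert ha, Finset.prod_insert ha, ← ih hF']
      exact LL_mul N hcop


lemma pow_div_dvd_factorial {p n : ℕ} (hp : p.Prime) : p ^ (n / p) ∣ n.factorial := by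
  rcases le_or_gt p n with h | h
  · rw [hp.pow_dvd_factorial_iff (lt_add_one _)]
    have h1 : 1 ∈ Ico 1 (Nat.log p n + 1) := by
      simp [Nat.succ_lt_succ_iff, Nat.log_pos hp.one_lt h]
    calc n / p = n / p ^ 1 := by simp
    _ ≤ ∑ i ∈ Ico 1 (Nat.log p n + 1), n / p ^ i :=
        Finset.single_le_sum (f := fun i => n / p ^ i) (fun i _ => Nat.zero_le _) h1
  · simp [Nat.div_eq_of_lt h]

lemma prod_pow_div_dvd_factorial (n : ℕ) :
    ∏ p ∈ (range (n+1)).filter Nat.Prime, p ^ (n / p) ∣ n.factorial := by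
  apply Finset.prod_dvd_of_isRelPrime
  · intro a ha b hb hab
    simp only [mem_coe, mem_filter] at ha hb
    simp only [Function.onFun]
    rw [← Nat.coprime_iff_isRelPrime]
    exact Nat.Coprime.pow _ _ (((Nat.coprime_primes ha.2 hb.2).mpr hab))
  · intro p hp
    simp only [mem_filter] at hp
    exact pow_div_dvd_factorial hp.2

lemma mertens1 {n : ℕ} (hn : 1 ≤ n) :
    ∑ p ∈ (range (n+1)).filter Nat.Prime, Real.log p / p ≤ Real.log n + Real.log 4 := by
  set P := (range (n+1)).filter Nat.Prime with hP
  have hppos : ∀ p ∈ P, 0 < (p:ℝ) := by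
    intro p hp
    simp only [hP, mem_filter] at hp
    exact_mod_cast hp.2.pos
  have hlogp : ∀ p ∈ P, 0 ≤ Real.log p := by
    intro p hp
    apply Real.log_nonneg
    have := hppos p hp
    exact_mod_cast Nat.one_le_cast.mpr (by simp only [hP, mem_filter] at hp; exact hp.2.one_lt.le)
  -- key 1 : ∑ (n/p : ℕ) * log p ≤ n * log n
  have key1 : ∑ p ∈ P, ((n / p : ℕ) : ℝ) * Real.log p ≤ n * Real.log n := by
    have hdvd := prod_pow_div_dvd_factorial n
    have hle : (∏ p ∈ P, p ^ (n / p) : ℕ) ≤ n.factorial :=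
      Nat.le_of_dvd n.factorial_pos hdvd
    have hle2 : (n.factorial : ℝ) ≤ (n : ℝ) ^ n := by
      exact_mod_cast Nat.factorial_le_pow n
    have hprodpos : 0 < (∏ p ∈ P, p ^ (n / p) : ℕ) := by
      apply Finset.prod_pos
      intro p hp
      exact pow_pos (by exact_mod_cast hppos p hp) _
    have hA : (0:ℝ) < ((∏ p ∈ P, p ^ (n / p) : ℕ) : ℝ) := by exact_mod_cast hprodpos
    have hAle : ((∏ p ∈ P, p ^ (n / p) : ℕ) : ℝ) ≤ (n : ℝ) ^ n :=
      le_trans (by exact_mod_cast hle) hle2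
    have hlog := Real.log_le_log hA hAle
    rw [Real.log_pow] at hlog
    calc ∑ p ∈ P, ((n / p : ℕ) : ℝ) * Real.log p
        = Real.log (∏ p ∈ P, (p:ℝ) ^ (n / p : ℕ)) := by
          rw [Real.log_prod]
          · refine Finset.sum_congr rfl fun p hp => ?_
            rw [Real.log_pow]
          · intro p hp
            exact (pow_pos (hppos p hp) _).ne'
    _ ≤ n * Real.log n := by
          have hcast : (∏ p ∈ P, (p:ℝ) ^ (n / p : ℕ)) = ((∏ p ∈ P, p ^ (n / p) : ℕ) : ℝ) := by
            push_cast
            rfl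
          rw [hcast]
          exact hlog
  -- key 2 : ∑ log p ≤ n * log 4
  have key2 : ∑ p ∈ P, Real.log p ≤ n * Real.log 4 := by
    have h1 : (primorial n : ℝ) ≤ (4:ℝ) ^ n := by exact_mod_cast primorial_le_4_pow n
    have h2 : Real.log (primorial n) ≤ n * Real.log 4 := by
      calc Real.log (primorial n) ≤ Real.log ((4:ℝ)^n) :=
            Real.log_le_log (by exact_mod_cast primorial_pos n) h1
      _ = n * Real.log 4 := by rw [Real.log_pow]
    calc ∑ p ∈ P, Real.log p = Real.log (∏ p ∈ P, (p:ℝ)) := by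
          rw [Real.log_prod (fun p hp => (hppos p hp).ne')]
    _ = Real.log (primorial n) := by
          congr 1
          rw [primorial]
          push_cast [hP]
          rfl
    _ ≤ n * Real.log 4 := h2
  -- combine
  have key3 : (n:ℝ) * ∑ p ∈ P, Real.log p / p ≤ (n:ℝ) * Real.log n + (n:ℝ) * Real.log 4 := by
    rw [Finset.mul_sum]
    calc ∑ p ∈ P, (n:ℝ) * (Real.log p / p)
        = ∑ p ∈ P, ((n:ℝ)/p) * Real.log p := by
          refine Finset.sum_congr rfl fun p hp => ?_
          field_simp
    _ ≤ ∑ p ∈ P, (((n / p : ℕ) : ℝ) + 1) * Real.log p := by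
          refine Finset.sum_le_sum fun p hp => ?_
          apply mul_le_mul_of_nonneg_right _ (hlogp p hp)
          have : ((n:ℝ)/p) < ((n / p : ℕ) : ℝ) + 1 := by
            have := Nat.lt_floor_add_one ((n:ℝ)/(p:ℝ))
            rwa [Nat.floor_div_natCast, Nat.floor_natCast] at this
          linarith
    _ = ∑ p ∈ P, ((n / p : ℕ) : ℝ) * Real.log p + ∑ p ∈ P, Real.log p := by
          rw [← Finset.sum_add_distrib]
          refine Finset.sum_congr rfl fun p hp => by ring
    _ ≤ (n:ℝ) * Real.log n + (n:ℝ) * Real.log 4 := add_le_add key1 key2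
  have hnpos : (0:ℝ) < n := by exact_mod_cast hn
  nlinarith [key3]

lemma sum_one_div_prime_le {n : ℕ} (hn : 2 ≤ n) :
    ∑ p ∈ (range (n+1)).filter Nat.Prime, (1:ℝ)/p ≤
      Real.log (Real.log n) +
        (3 * Real.log 4 / Real.log 2 - Real.log (Real.log 2) + 1) := by
  set c : ℝ := Real.log 4 with hc
  have hc0 : 0 ≤ c := Real.log_nonneg (by norm_num)
  have hlog2 : (0:ℝ) < Real.log 2 := Real.log_pos (by norm_num)
  set E : ℝ := 3 * c / Real.log 2 - Real.log (Real.log 2) with hE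
  have main : ∀ m : ℕ, 2 ≤ m →
      ∑ p ∈ (range (m+1)).filter Nat.Prime, (1:ℝ)/p
        - (∑ p ∈ (range (m+1)).filter Nat.Prime, Real.log p / p) / Real.log m
        + 3 * c / Real.log m
      ≤ Real.log (Real.log m) + E := by
    intro m hm
    induction m, hm using Nat.le_induction with
    | base =>
        have hset : (range 3).filter Nat.Prime = {2} := by decide
        rw [show ((2:ℕ)+1) = 3 from rfl, hset]
        simp only [Finset.sum_singleton, Nat.cast_ofNat, hE]
        field_simp
        ring_nf
        norm_num [Real.log_ne_zero_of_pos_of_ne_one]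
    | succ m hm ih =>
        have hm1 : (1:ℝ) < m := by exact_mod_cast hm
        have ha : (0:ℝ) < Real.log m := Real.log_pos hm1
        have hb : (0:ℝ) < Real.log (m+1) := Real.log_pos (by push_cast; linarith)
        have hab : Real.log m ≤ Real.log (m+1) :=
          Real.log_le_log (by linarith) (by push_cast; linarith)
        set a := Real.log m
        set b := Real.log (m+1)
        set Sm := ∑ p ∈ (range (m+1)).filter Nat.Prime, Real.log p / p with hSm
        set Qm := ∑ p ∈ (range (m+1)).filter Nat.Prime, (1:ℝ)/p with hQm
        set Sm' := ∑ p ∈ (range (m+2)).filter Nat.Prime, Real.log p / p with hSm'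
        set Qm' := ∑ p ∈ (range (m+2)).filter Nat.Prime, (1:ℝ)/p with hQm'
        have hcast : ((m:ℝ) + 1) = ((m+1 : ℕ) : ℝ) := by push_cast; ring
        have hstep : Qm' - Qm = (Sm' - Sm) / b := by
          have hnotmem : (m+1) ∉ range (m+1) := by simp
          rw [hQm', hSm', show m + 2 = (m+1) + 1 from rfl, range_add_one, filter_insert]
          by_cases hpr : (m+1).Prime
          · rw [if_pos hpr, Finset.sum_insert (by simp [hnotmem]),
              Finset.sum_insert (by simp [hnotmem])]
            rw [← hQm, ← hSm]
            have : Real.log ((m+1 : ℕ):ℝ) = b := by rw [← hcast]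
            rw [this]
            have hmp : ((m+1:ℕ):ℝ) ≠ 0 := by push_cast; linarith
            field_simp
            ring
          · rw [if_neg hpr, ← hQm, ← hSm]
            simp
        -- reduce goal
        have hgoal : Qm' - Sm'/b + 3*c/b = Qm - Sm/b + 3*c/b := by
          have := hstep
          field_simp at this ⊢
          linarith [this]
        have hloggoal : Real.log (((m+1:ℕ)):ℝ) = b := by rw [← hcast]
        rw [hloggoal, hgoal]
        -- now show Qm - Sm/b + 3c/b ≤ log b + E
        have hS_le : Sm ≤ a + c := mertens1 (by omega)
        have ht : 0 ≤ 1/a - 1/b := by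
          have := one_div_le_one_div_of_le ha hab
          linarith
        have hkey : (Sm - 3*c) * (1/a - 1/b) ≤ Real.log b - Real.log a := by
          have h1 : (Sm - 3*c) * (1/a - 1/b) ≤ (a - 2*c) * (1/a - 1/b) :=
            mul_le_mul_of_nonneg_right (by linarith) ht
          have h2 : (a - 2*c) * (1/a - 1/b) ≤ a * (1/a - 1/b) :=
            mul_le_mul_of_nonneg_right (by linarith) ht |>.trans_eq rfl
          have h3 : a * (1/a - 1/b) = 1 - a/b := by field_simp
          have h4 : 1 - a/b ≤ Real.log b - Real.log a := by
            have h5 := Real.log_le_sub_one_of_pos (show (0:ℝ) < a/b from div_pos ha hb)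
            rw [Real.log_div ha.ne' hb.ne'] at h5
            linarith
          have h2' : (a - 2*c) * (1/a - 1/b) ≤ 1 - a/b := by
            have : (a - 2*c) * (1/a - 1/b) ≤ a * (1/a - 1/b) :=
              mul_le_mul_of_nonneg_right (by linarith) ht
            linarith [this, h3.symm.le]
          linarith
        have hexpand : Qm - Sm/b + 3*c/b - (Qm - Sm/a + 3*c/a)
            = (Sm - 3*c) * (1/a - 1/b) := by
          field_simp
          ring
        linarith [ih, hexpand, hkey]
  -- conclude
  have h := main n hn
  have hn1 : (1:ℝ) < n := by exact_mod_cast hn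
  have ha : (0:ℝ) < Real.log n := Real.log_pos hn1
  have hS_le : (∑ p ∈ (range (n+1)).filter Nat.Prime, Real.log p / p) ≤ Real.log n + c :=
    mertens1 (by omega)
  have h2 : (∑ p ∈ (range (n+1)).filter Nat.Prime, Real.log p / p) / Real.log n
      ≤ 1 + c / Real.log n := by
    rw [div_le_iff₀ ha]
    field_simp
    linarith
  have h3 : 0 ≤ 3 * c / Real.log n := by positivity
  have hcla : c / Real.log n ≤ c / Real.log 2 := by
    apply div_le_div_of_nonneg_left hc0 hlog2
    exact Real.log_le_log (by norm_num) (by exact_mod_cast hn)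
  rw [hE] at h
  have h4 : 3 * c / Real.log n = 3 * (c / Real.log n) := by ring
  have h5 : 0 ≤ c / Real.log n := by positivity
  linarith [h, h2, h4, h5]

lemma part2_final : ∃ C : ℝ, 0 < C ∧ ∀ B : ℝ, 2 ≤ B →
    (∏ r ∈ (Finset.range (⌊B⌋₊ + 1)).filter Nat.Prime, (((r : ℝ) + 1) / 2) / r) ≤
      C * Real.log B / 2 ^ ((Finset.range (⌊B⌋₊ + 1)).filter Nat.Prime).card := by
  set K : ℝ := 3 * Real.log 4 / Real.log 2 - Real.log (Real.log 2) + 1 with hK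
  refine ⟨Real.exp K, Real.exp_pos K, fun B hB => ?_⟩
  set n := ⌊B⌋₊ with hn
  have hn2 : 2 ≤ n := Nat.le_floor (by exact_mod_cast hB)
  set P := (range (n+1)).filter Nat.Prime with hP
  have hppos : ∀ p ∈ P, 0 < (p:ℝ) := by
    intro p hp
    simp only [hP, mem_filter] at hp
    exact_mod_cast hp.2.pos
  have step1 : ∏ p ∈ P, (((p : ℝ) + 1) / 2) / p = (∏ p ∈ P, (1 + 1/(p:ℝ))) / 2 ^ P.card := by
    rw [← Finset.prod_const (2:ℝ), ← Finset.prod_div_distrib]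
    refine Finset.prod_congr rfl fun p hp => ?_
    have := (hppos p hp).ne'
    field_simp
  have step2 : ∏ p ∈ P, (1 + 1/(p:ℝ)) ≤ Real.exp K * Real.log n := by
    have h1 : ∏ p ∈ P, (1 + 1/(p:ℝ)) ≤ ∏ p ∈ P, Real.exp (1/(p:ℝ)) := by
      apply Finset.prod_le_prod
      · intro p hp
        have := hppos p hp
        positivity
      · intro p hp
        have := Real.add_one_le_exp (1/(p:ℝ))
        linarith
    have h2 : ∏ p ∈ P, Real.exp (1/(p:ℝ)) = Real.exp (∑ p ∈ P, 1/(p:ℝ)) :=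
      (Real.exp_sum P _).symm
    have h3 := sum_one_div_prime_le hn2
    have h4 : Real.exp (∑ p ∈ P, 1/(p:ℝ)) ≤ Real.exp (Real.log (Real.log n) + K) :=
      Real.exp_le_exp.mpr (by rw [hP, hK]; exact h3)
    have hlogn : (0:ℝ) < Real.log n := by
      apply Real.log_pos
      have : 1 < n := lt_of_lt_of_le one_lt_two hn2
      exact_mod_cast this
    rw [Real.exp_add, Real.exp_log hlogn] at h4
    calc ∏ p ∈ P, (1 + 1/(p:ℝ)) ≤ Real.exp (∑ p ∈ P, 1/(p:ℝ)) := by rw [← h2]; exact h1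
    _ ≤ Real.log n * Real.exp K := h4
    _ = Real.exp K * Real.log n := by ring
  have hlogle : Real.log n ≤ Real.log B := by
    apply Real.log_le_log
    · have : 0 < n := lt_of_lt_of_le two_pos hn2
      exact_mod_cast this
    · exact Nat.floor_le (by linarith)
  calc ∏ p ∈ P, (((p : ℝ) + 1) / 2) / p = (∏ p ∈ P, (1 + 1/(p:ℝ))) / 2 ^ P.card := step1
  _ ≤ (Real.exp K * Real.log B) / 2 ^ P.card := by
      gcongr
      exact step2.trans (mul_le_mul_of_nonneg_left hlogle (Real.exp_pos K).le)

theorem stmt_14 :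
    (∀ (N : ℕ) (B : ℝ),
      Nat.Coprime N (∏ r ∈ (Finset.range (⌊B⌋₊ + 1)).filter
          (fun r => r.Prime ∧ 2 < r), r) →
      (Set.ncard {s : ZMod (∏ r ∈ (Finset.range (⌊B⌋₊ + 1)).filter
            (fun r => r.Prime ∧ 2 < r), r) |
          ∃ x y, x * y = (N : ZMod (∏ r ∈ (Finset.range (⌊B⌋₊ + 1)).filter
            (fun r => r.Prime ∧ 2 < r), r)) ∧ x + y = s} : ℝ) /
        (∏ r ∈ (Finset.range (⌊B⌋₊ + 1)).filter (fun r => r.Prime ∧ 2 < r), r : ℕ) ≤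
      (4 / 3) * ∏ r ∈ (Finset.range (⌊B⌋₊ + 1)).filter Nat.Prime,
        (((r : ℝ) + 1) / 2) / r) ∧
    ∃ C : ℝ, 0 < C ∧ ∀ B : ℝ, 2 ≤ B →
      (∏ r ∈ (Finset.range (⌊B⌋₊ + 1)).filter Nat.Prime, (((r : ℝ) + 1) / 2) / r) ≤
        C * Real.log B / 2 ^ ((Finset.range (⌊B⌋₊ + 1)).filter Nat.Prime).card := by
  constructor
  · intro N B hcop
    classical
    set m := ⌊B⌋₊ with hm
    set F := (Finset.range (m + 1)).filter (fun r => r.Prime ∧ 2 < r) with hFdef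
    set G := (Finset.range (m + 1)).filter Nat.Prime with hGdef
    have hFprime : ∀ r ∈ F, r.Prime := fun r hr => ((mem_filter.mp hr).2).1
    rw [L_prod N F hFprime]
    set c : ℕ → ℕ :=
      fun r => {s : ZMod r | ∃ x y, x * y = (N : ZMod r) ∧ x + y = s}.ncard with hcdef
    have hbound : ∀ r ∈ F, ((c r : ℕ) : ℝ) / r ≤ (((r:ℝ) + 1) / 2) / r := by
      intro r hr
      have hrpr := hFprime r hr
      have hrdvdQ : r ∣ ∏ r ∈ F, r := Finset.dvd_prod_of_mem _ hr
      have hrN : ¬ r ∣ N := by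
        intro hdvd
        have : r ∣ Nat.gcd N (∏ r ∈ F, r) := Nat.dvd_gcd hdvd hrdvdQ
        rw [hcop] at this
        exact hrpr.one_lt.ne' (Nat.dvd_one.mp this)
      have h2 : 2 * c r ≤ r + 1 := card_L_prime hrpr hrN
      have hrpos : (0:ℝ) < r := by exact_mod_cast hrpr.pos
      have h2R : (c r : ℝ) ≤ ((r:ℝ) + 1) / 2 := by
        rw [le_div_iff₀ (by norm_num : (0:ℝ) < 2)]
        calc (c r : ℝ) * 2 = ((2 * c r : ℕ) : ℝ) := by push_cast; ring
        _ ≤ ((r + 1 : ℕ) : ℝ) := by exact_mod_cast h2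
        _ = (r:ℝ) + 1 := by push_cast; ring
      exact div_le_div_of_nonneg_right h2R hrpos.le |>.trans_eq rfl
    have hprodle : ∏ r ∈ F, ((c r : ℕ) : ℝ) / r ≤ ∏ r ∈ F, (((r:ℝ) + 1) / 2) / r := by
      apply Finset.prod_le_prod
      · intro r hr
        have : (0:ℝ) < r := by exact_mod_cast (hFprime r hr).pos
        positivity
      · exact hbound
    have hcast : ((∏ r ∈ F, c r : ℕ) : ℝ) / ((∏ r ∈ F, r : ℕ) : ℝ)
        = ∏ r ∈ F, ((c r : ℕ) : ℝ) / r := by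
      rw [Nat.cast_prod, Nat.cast_prod, ← Finset.prod_div_distrib]
    rw [hcast]
    by_cases h2 : 2 ≤ m
    · have h2F : 2 ∉ F := by simp [hFdef]
      have hGins : G = insert 2 F := by
        ext r
        simp only [hGdef, hFdef, mem_insert, mem_filter, mem_range]
        constructor
        · rintro ⟨hrange, hpr⟩
          rcases eq_or_ne r 2 with rfl | hne
          · exact Or.inl rfl
          · exact Or.inr ⟨hrange, hpr, lt_of_le_of_ne hpr.two_le (Ne.symm hne)⟩
        · rintro (rfl | ⟨hrange, hpr, _⟩)
          · exact ⟨by omega, Nat.prime_two⟩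
          · exact ⟨hrange, hpr⟩
      rw [hGins, Finset.prod_insert h2F]
      have : (4:ℝ) / 3 * (((((2:ℕ):ℝ) + 1) / 2 / ((2:ℕ):ℝ)) * ∏ r ∈ F, (((r:ℝ) + 1) / 2) / r)
          = ∏ r ∈ F, (((r:ℝ) + 1) / 2) / r := by
        push_cast
        ring
      rw [this]
      exact hprodle
    · have hFempty : F = ∅ := by
        rw [hFdef, Finset.filter_eq_empty_iff]
        intro r hr
        simp only [mem_range] at hr
        rintro ⟨hpr, hlt⟩
        omega
      have hGempty : G = ∅ := by
        rw [hGdef, Finset.filter_eq_empty_iff]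
        intro r hr hpr
        simp only [mem_range] at hr
        have := hpr.two_le
        omega
      rw [hFempty, hGempty]
      simp
      norm_num
  · exact part2_final
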